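/- Let h : ℝ → ℝ be C¹ and let φ^t : ℝ³ → ℝ³ be the flow φ^t(x_0, y_0, z_0) = ( x_0 + ∫_0^t h'(y_0 e^{−s}) ds, y_0 e^{−t}, −h(y_0 e^{−t}) + e^{−t}(h(y_0) + z_0) ) of the characteristic equations for H(x,y,z) = z + h(y). Then for every t > 0 the function Φ^t(x_0, Y, z_0) = ∫_0^t e^{−s} h(e^{s} Y) ds + z_0 (1 − e^{−t}) is a generating function for φ^t: 1 − ∂_{z_0}Φ^t = e^{−t} ≠ 0, and for all (x,y,z), (X,Y,Z) ∈ ℝ³ the system X − x = ∂_YΦ^t(x,Y,z), Y − y = −∂_xΦ^t(x,Y,z) − y·∂_zΦ^t(x,Y,z), Z − z = (X − x)·Y − Φ^t(x,Y,z) holds if and only if φ^t(x,y,z) = (X,Y,Z). -/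

import Mathlib

open Filter Topology

section Aux
open MeasureTheory intervalIntegral

lemma hasDerivAt_hexp (h : ℝ → ℝ) (hh : ContDiff ℝ 1 h) (s x : ℝ) :
    HasDerivAt (fun x' => Real.exp (-s) * h (Real.exp s * x'))
      (deriv h (Real.exp s * x)) x := by
  have h1 : HasDerivAt (fun x' : ℝ => Real.exp s * x') (Real.exp s) x := by
    simpa using (hasDerivAt_id x).const_mul (Real.exp s)
  have h2 : HasDerivAt h (deriv h (Real.exp s * x)) (Real.exp s * x) :=
    ((hh.differentiable one_ne_zero) _).hasDerivAt
  have h3 := (h2.comp x h1).const_mul (Real.exp (-s))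
  refine h3.congr_deriv ?_
  rw [Real.exp_neg]
  field_simp

lemma hasDerivAt_F (h : ℝ → ℝ) (hh : ContDiff ℝ 1 h) (t Y : ℝ) :
    HasDerivAt (fun Y' => ∫ s in (0:ℝ)..t, Real.exp (-s) * h (Real.exp s * Y'))
      (∫ s in (0:ℝ)..t, deriv h (Real.exp s * Y)) Y := by
  have hdc : Continuous (deriv h) := hh.continuous_deriv le_rfl
  have hch : Continuous h := hh.continuous
  set M := Real.exp |t| * (|Y| + 1) with hM
  obtain ⟨C, hC⟩ := (isCompact_Icc (a := -M) (b := M)).exists_bound_of_continuousOn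
    hdc.continuousOn
  refine (intervalIntegral.hasDerivAt_integral_of_dominated_loc_of_deriv_le
    (F := fun x s => Real.exp (-s) * h (Real.exp s * x))
    (F' := fun x s => deriv h (Real.exp s * x)) (bound := fun _ => C)
    (Metric.ball_mem_nhds Y one_pos) ?_ ?_ ?_ ?_ ?_ ?_).2
  · exact Filter.Eventually.of_forall fun x =>
      (Continuous.mul (by fun_prop) (hch.comp (by fun_prop))).aestronglyMeasurable
  · exact (Continuous.mul (by fun_prop) (hch.comp (by fun_prop))).intervalIntegrable _ _
  · exact (hdc.comp (by fun_prop)).aestronglyMeasurable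
  · refine Filter.Eventually.of_forall fun s hs x hx => ?_
    refine hC _ ?_
    have hs' : |s| ≤ |t| := by
      rcases Set.mem_uIoc.1 hs with h1 | h1 <;> rw [abs_le] <;>
        constructor <;> nlinarith [abs_nonneg t, le_abs_self t, neg_abs_le t, h1.1, h1.2]
    have hx' : |x| ≤ |Y| + 1 := by
      have := mem_ball_iff_norm.1 hx
      have : |x - Y| < 1 := this
      have := abs_sub_abs_le_abs_sub x Y
      linarith
    have : |Real.exp s * x| ≤ M := by
      rw [abs_mul, Real.abs_exp, hM]
      have h1 : Real.exp s ≤ Real.exp |t| := Real.exp_le_exp.2 (le_trans (le_abs_self s) hs')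
      have h2 : (0:ℝ) ≤ Real.exp s := (Real.exp_pos s).le
      nlinarith [abs_nonneg x, Real.exp_pos |t|]
    exact abs_le.1 this |>.imp (fun h => h) (fun h => h) |> fun ⟨a, b⟩ => ⟨a, b⟩
  · exact intervalIntegrable_const
  · exact Filter.Eventually.of_forall fun s hs x hx => hasDerivAt_hexp h hh s x

lemma integral_split (h : ℝ → ℝ) (hh : ContDiff ℝ 1 h) (t Y : ℝ) :
    (∫ s in (0:ℝ)..t, Real.exp (-s) * h (Real.exp s * Y))
      = h Y - Real.exp (-t) * h (Real.exp t * Y)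
        + Y * ∫ s in (0:ℝ)..t, deriv h (Real.exp s * Y) := by
  have hdc : Continuous (deriv h) := hh.continuous_deriv le_rfl
  have hch : Continuous h := hh.continuous
  have key : ∀ s : ℝ, HasDerivAt (fun s' => -(Real.exp (-s') * h (Real.exp s' * Y)))
      (Real.exp (-s) * h (Real.exp s * Y) - Y * deriv h (Real.exp s * Y)) s := by
    intro s
    have hu : HasDerivAt (fun s' : ℝ => Real.exp (-s')) (-Real.exp (-s)) s := by
      simpa using (hasDerivAt_neg s).exp
    have hv : HasDerivAt (fun s' : ℝ => h (Real.exp s' * Y))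
        (deriv h (Real.exp s * Y) * (Real.exp s * Y)) s := by
      have hw : HasDerivAt (fun s' : ℝ => Real.exp s' * Y) (Real.exp s * Y) s :=
        (Real.hasDerivAt_exp s).mul_const Y
      exact (((hh.differentiable one_ne_zero) _).hasDerivAt).comp s hw
    have := (hu.mul hv).neg
    refine this.congr_deriv ?_
    have he : Real.exp (-s) * Real.exp s = 1 := by rw [← Real.exp_add]; simp
    linear_combination -(Y * deriv h (Real.exp s * Y)) * he
  have c1 : Continuous fun s : ℝ => Real.exp (-s) * h (Real.exp s * Y) :=
    (Real.continuous_exp.comp continuous_neg).mul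
      (hch.comp (Real.continuous_exp.mul continuous_const))
  have c2 : Continuous fun s : ℝ => Y * deriv h (Real.exp s * Y) :=
    continuous_const.mul (hdc.comp (Real.continuous_exp.mul continuous_const))
  have hint : IntervalIntegrable
      (fun s => Real.exp (-s) * h (Real.exp s * Y) - Y * deriv h (Real.exp s * Y))
      MeasureTheory.volume 0 t :=
    (c1.sub c2).intervalIntegrable _ _
  have h1 := intervalIntegral.integral_eq_sub_of_hasDerivAt (fun s _ => key s) hint
  have h2 : (∫ s in (0:ℝ)..t,
      (Real.exp (-s) * h (Real.exp s * Y) - Y * deriv h (Real.exp s * Y)))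
      = (∫ s in (0:ℝ)..t, Real.exp (-s) * h (Real.exp s * Y))
        - Y * ∫ s in (0:ℝ)..t, deriv h (Real.exp s * Y) := by
    rw [intervalIntegral.integral_sub (c1.intervalIntegrable _ _) (c2.intervalIntegrable _ _),
      intervalIntegral.integral_const_mul]
  rw [h2] at h1
  simp only [neg_zero, Real.exp_zero, one_mul] at h1
  linarith

end Aux

/-- The explicit characteristic flow of `H(x,y,z) = z + h(y)`. -/
noncomputable def charFlow (h : ℝ → ℝ) (t : ℝ) (p : ℝ × ℝ × ℝ) : ℝ × ℝ × ℝ :=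
  (p.1 + ∫ s in (0:ℝ)..t, deriv h (p.2.1 * Real.exp (-s)),
   p.2.1 * Real.exp (-t),
   -h (p.2.1 * Real.exp (-t)) + Real.exp (-t) * (h p.2.1 + p.2.2))

/-- The candidate generating function `Φ^t(x₀, Y, z₀) = ∫₀ᵗ e^{−s} h(e^{s} Y) ds + z₀(1 − e^{−t})`. -/
noncomputable def genFun (h : ℝ → ℝ) (t : ℝ) (x Y z : ℝ) : ℝ :=
  (∫ s in (0:ℝ)..t, Real.exp (-s) * h (Real.exp s * Y)) + z * (1 - Real.exp (-t))

/-- For every `t > 0`, `Φ^t` is a generating function for the flow `φ^t` of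
the characteristic equations of `H(x,y,z) = z + h(y)`:
`1 − ∂_{z₀}Φ^t = e^{−t} ≠ 0`, and the generating-function system holds iff
`φ^t(x,y,z) = (X,Y,Z)`. -/
theorem genFun_is_generating_function (h : ℝ → ℝ) (hh : ContDiff ℝ 1 h) :
    ∀ t : ℝ, 0 < t →
      (∀ x Y z : ℝ, 1 - deriv (fun z' => genFun h t x Y z') z = Real.exp (-t)) ∧
      Real.exp (-t) ≠ 0 ∧
      ∀ x y z X Y Z : ℝ,
        (X - x = deriv (fun Y' => genFun h t x Y' z) Y ∧
          Y - y = -deriv (fun x' => genFun h t x' Y z) x -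
            deriv (fun z' => genFun h t x Y z') z * y ∧
          Z - z = (X - x) * Y - genFun h t x Y z)
        ↔ charFlow h t (x, y, z) = (X, Y, Z) := by
  intro t ht
  have hdz : ∀ x Y z : ℝ, deriv (fun z' => genFun h t x Y z') z = 1 - Real.exp (-t) := by
    intro x Y z
    have : HasDerivAt (fun z' => genFun h t x Y z') (1 - Real.exp (-t)) z := by
      unfold genFun
      simpa using ((hasDerivAt_id z).mul_const (1 - Real.exp (-t))).const_add
        (∫ s in (0:ℝ)..t, Real.exp (-s) * h (Real.exp s * Y))
    exact this.deriv
  have hdx : ∀ x Y z : ℝ, deriv (fun x' => genFun h t x' Y z) x = 0 := by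
    intro x Y z; simp [genFun]
  have hdY : ∀ x Y z : ℝ, deriv (fun Y' => genFun h t x Y' z) Y
      = ∫ s in (0:ℝ)..t, deriv h (Real.exp s * Y) := by
    intro x Y z
    exact (((hasDerivAt_F h hh t Y).add_const _).congr_deriv rfl).deriv
  refine ⟨fun x Y z => by rw [hdz]; ring, Real.exp_ne_zero _, fun x y z X Y Z => ?_⟩
  rw [hdz, hdx, hdY]
  have hswap : ∀ y : ℝ, (∫ s in (0:ℝ)..t, deriv h (Real.exp s * (y * Real.exp (-t))))
      = ∫ s in (0:ℝ)..t, deriv h (y * Real.exp (-s)) := by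
    intro y
    have h0 := intervalIntegral.integral_comp_sub_left (a := (0:ℝ)) (b := t)
      (fun u => deriv h (y * Real.exp (-u))) t
    simp only [sub_self, sub_zero] at h0
    rw [← h0]
    apply intervalIntegral.integral_congr
    intro s _
    show deriv h (Real.exp s * (y * Real.exp (-t))) = deriv h (y * Real.exp (-(t - s)))
    congr 1
    rw [show Real.exp s * (y * Real.exp (-t)) = y * (Real.exp s * Real.exp (-t)) by ring,
      ← Real.exp_add]
    congr 1; ring
  constructor
  · rintro ⟨h1, h2, h3⟩
    have hY : Y = y * Real.exp (-t) := by linear_combination h2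
    have hsplit := integral_split h hh t Y
    have hEY : Real.exp t * Y = y := by
      rw [hY, show Real.exp t * (y * Real.exp (-t)) = y * (Real.exp t * Real.exp (-t)) by ring,
        ← Real.exp_add]
      simp
    simp only [charFlow, Prod.mk.injEq]
    refine ⟨?_, hY.symm, ?_⟩
    · rw [← hswap y, ← hY]
      linarith [h1]
    · rw [genFun, hsplit, hEY] at h3
      rw [← hY]
      linear_combination -h3 - Y * h1
  · intro hφ
    simp only [charFlow, Prod.mk.injEq] at hφ
    obtain ⟨h1, h2, h3⟩ := hφ
    have hY : Y = y * Real.exp (-t) := h2.symm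
    have hsplit := integral_split h hh t Y
    have hEY : Real.exp t * Y = y := by
      rw [hY, show Real.exp t * (y * Real.exp (-t)) = y * (Real.exp t * Real.exp (-t)) by ring,
        ← Real.exp_add]
      simp
    have hX : X - x = ∫ s in (0:ℝ)..t, deriv h (Real.exp s * Y) := by
      rw [hY, hswap]
      linarith [h1]
    refine ⟨hX, by rw [hY]; ring, ?_⟩
    rw [genFun, hsplit, hEY]
    rw [← hY] at h3
    linear_combination -h3 - Y * hX
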